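/- Let n ≥ 1 and let x, y : Fin n → ℝ take values in {0, 1}, with both x and y non-constant (so SST(x) > 0 and SST(y) > 0). Let r denote the sample Pearson correlation of x and y (the φ coefficient). Then the minimum over all functions f : ℝ → ℝ that are either non-decreasing or non-increasing of SSE(f) = ∑_{r} (y r − f (x r))² equals (1 − r²) · SST(y); equivalently, for dichotomous items the best monotone-direction isotonic R² equals the squared φ coefficient: max(R²_iso in the non-decreasing direction, R²_iso in the non-increasing direction) = r². -/
import Mathlib


/-- Sum of squared errors of predictor `f` for regressing `y` on `x`. -/
noncomputable def sse {n : ℕ} (x y : Fin n → ℝ) (f : ℝ → ℝ) : ℝ :=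
  ∑ r, (y r - f (x r)) ^ 2

/-- Mean of a data vector. -/
noncomputable def mean {n : ℕ} (y : Fin n → ℝ) : ℝ := (1 / n) * ∑ r, y r

/-- Total sum of squares of a data vector. -/
noncomputable def sst {n : ℕ} (y : Fin n → ℝ) : ℝ := ∑ r, (y r - mean y) ^ 2

/-- Sample Pearson correlation (the φ coefficient for dichotomous items). -/
noncomputable def pearson {n : ℕ} (x y : Fin n → ℝ) : ℝ :=
  (∑ r, (x r - mean x) * (y r - mean y)) / Real.sqrt (sst x * sst y)

lemma binary_sum_sq {ι : Type*} (S : Finset ι) (y : ι → ℝ) (hy : ∀ r, y r = 0 ∨ y r = 1) (c : ℝ) :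
    ∑ r ∈ S, (y r - c)^2 = (∑ r ∈ S, y r) - 2*c*(∑ r ∈ S, y r) + S.card * c^2 := by
  have h : ∀ r ∈ S, (y r - c)^2 = y r - 2*c*y r + c^2 := by
    intro r _; rcases hy r with h|h <;> rw [h] <;> ring
  rw [Finset.sum_congr rfl h, Finset.sum_add_distrib, Finset.sum_sub_distrib, ← Finset.mul_sum,
    Finset.sum_const, nsmul_eq_mul]

lemma gen_sum_mul {ι : Type*} (S : Finset ι) (x y : ι → ℝ) (c d : ℝ) :
    ∑ r ∈ S, (x r - c)*(y r - d) =
      (∑ r ∈ S, x r * y r) - c * (∑ r ∈ S, y r) - d * (∑ r ∈ S, x r) + S.card * (c*d) := by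
  have h : ∀ r ∈ S, (x r - c)*(y r - d) = x r * y r - c * y r - d * x r + c*d := by
    intro r _; ring
  rw [Finset.sum_congr rfl h, Finset.sum_add_distrib, Finset.sum_sub_distrib,
    Finset.sum_sub_distrib, ← Finset.mul_sum, ← Finset.mul_sum, Finset.sum_const, nsmul_eq_mul]

lemma sst_pos {n : ℕ} (y : Fin n → ℝ) (h : ∃ r s, y r ≠ y s) : 0 < sst y := by
  have h0 : 0 ≤ sst y := Finset.sum_nonneg fun r _ => sq_nonneg _
  rcases h with ⟨r, s, hrs⟩
  rcases h0.lt_or_eq with h|h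
  · exact h
  exfalso
  have hz := (Finset.sum_eq_zero_iff_of_nonneg (fun i _ => sq_nonneg (y i - mean y))).mp h.symm
  have hr := sub_eq_zero.mp (sq_eq_zero_iff.mp (hz r (Finset.mem_univ r)))
  have hs := sub_eq_zero.mp (sq_eq_zero_iff.mp (hz s (Finset.mem_univ s)))
  exact hrs (hr.trans hs.symm)

set_option maxHeartbeats 1000000 in
/-- For dichotomous items, the minimal SSE over all monotone-in-either-direction
predictors equals `(1 - φ²)·SST(y)`; equivalently, the best monotone-direction isotonic
`R²` equals the squared φ coefficient. -/
theorem dichotomous_isoR2_eq_phi_sq (n : ℕ) (hn : 1 ≤ n) (x y : Fin n → ℝ)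
    (hx01 : ∀ r, x r = 0 ∨ x r = 1) (hy01 : ∀ r, y r = 0 ∨ y r = 1)
    (hxnc : ∃ r s, x r ≠ x s) (hync : ∃ r s, y r ≠ y s) :
    sInf {e : ℝ | ∃ f : ℝ → ℝ, (Monotone f ∨ Antitone f) ∧ e = sse x y f} =
        (1 - pearson x y ^ 2) * sst y ∧
      max (1 - sInf {e : ℝ | ∃ f : ℝ → ℝ, Monotone f ∧ e = sse x y f} / sst y)
          (1 - sInf {e : ℝ | ∃ f : ℝ → ℝ, Antitone f ∧ e = sse x y f} / sst y) =
        pearson x y ^ 2 := by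
  classical
  obtain ⟨S0, hS0def⟩ : ∃ S : Finset (Fin n), S = Finset.univ.filter (fun r => x r = 0) := ⟨_, rfl⟩
  obtain ⟨S1, hS1def⟩ : ∃ S : Finset (Fin n), S = Finset.univ.filter (fun r => ¬ x r = 0) := ⟨_, rfl⟩
  have hx0 : ∀ r ∈ S0, x r = 0 := by intro r hr; rw [hS0def] at hr; exact (Finset.mem_filter.mp hr).2
  have hx1 : ∀ r ∈ S1, x r = 1 := by
    intro r hr; rw [hS1def] at hr
    rcases hx01 r with h|h
    · exact absurd h (Finset.mem_filter.mp hr).2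
    · exact h
  obtain ⟨n0, hn0def⟩ : ∃ v : ℝ, v = (S0.card : ℝ) := ⟨_, rfl⟩
  obtain ⟨n1, hn1def⟩ : ∃ v : ℝ, v = (S1.card : ℝ) := ⟨_, rfl⟩
  obtain ⟨s0, hs0def⟩ : ∃ v : ℝ, v = ∑ r ∈ S0, y r := ⟨_, rfl⟩
  obtain ⟨s1, hs1def⟩ : ∃ v : ℝ, v = ∑ r ∈ S1, y r := ⟨_, rfl⟩
  have hsplit : ∀ g : Fin n → ℝ, ∑ r, g r = ∑ r ∈ S0, g r + ∑ r ∈ S1, g r := by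
    intro g
    rw [hS0def, hS1def]
    exact (Finset.sum_filter_add_sum_filter_not Finset.univ (fun r => x r = 0) g).symm
  have hS0ne : S0.Nonempty := by
    rw [Finset.nonempty_iff_ne_empty]
    intro hS0e
    have hall : ∀ r, x r = 1 := by
      intro r
      rcases hx01 r with h|h
      · have : r ∈ S0 := by rw [hS0def]; exact Finset.mem_filter.mpr ⟨Finset.mem_univ r, h⟩
        rw [hS0e] at this; exact absurd this (Finset.notMem_empty r)
      · exact h
    rcases hxnc with ⟨r, s, hrs⟩; exact hrs ((hall r).trans (hall s).symm)
  have hS1ne : S1.Nonempty := by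
    rw [Finset.nonempty_iff_ne_empty]
    intro hS1e
    have hall : ∀ r, x r = 0 := by
      intro r
      by_contra h
      have : r ∈ S1 := by rw [hS1def]; exact Finset.mem_filter.mpr ⟨Finset.mem_univ r, h⟩
      rw [hS1e] at this; exact absurd this (Finset.notMem_empty r)
    rcases hxnc with ⟨r, s, hrs⟩; exact hrs ((hall r).trans (hall s).symm)
  have hn0 : 0 < n0 := by rw [hn0def]; exact_mod_cast Finset.card_pos.mpr hS0ne
  have hn1 : 0 < n1 := by rw [hn1def]; exact_mod_cast Finset.card_pos.mpr hS1ne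
  have hnn : (n : ℝ) = n0 + n1 := by
    have h := hsplit (fun _ => (1:ℝ))
    simp only [Finset.sum_const, Finset.card_univ, Fintype.card_fin, nsmul_eq_mul, mul_one] at h
    rw [hn0def, hn1def]; exact h
  have hnpos : (0:ℝ) < n := by rw [hnn]; linarith
  have hsx : ∑ r, x r = n1 := by
    have e0 : ∑ r ∈ S0, x r = 0 := Finset.sum_eq_zero hx0
    have e1 : ∑ r ∈ S1, x r = ∑ r ∈ S1, (1:ℝ) := Finset.sum_congr rfl hx1
    rw [hsplit x, e0, e1, Finset.sum_const, nsmul_eq_mul, mul_one, zero_add, hn1def]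
  have hsy : ∑ r, y r = s0 + s1 := by rw [hsplit y, hs0def, hs1def]
  have hsxy : ∑ r, x r * y r = s1 := by
    have e0 : ∑ r ∈ S0, x r * y r = 0 :=
      Finset.sum_eq_zero (fun r hr => by rw [hx0 r hr, zero_mul])
    have e1 : ∑ r ∈ S1, x r * y r = ∑ r ∈ S1, y r :=
      Finset.sum_congr rfl (fun r hr => by rw [hx1 r hr, one_mul])
    rw [hsplit (fun r => x r * y r), e0, e1, zero_add, hs1def]
  have hmx : mean x = n1 / n := by unfold mean; rw [hsx]; ring
  have hmy : mean y = (s0 + s1) / n := by unfold mean; rw [hsy]; ring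
  have hsstx : sst x = n1 - n1^2 / n := by
    unfold sst
    rw [binary_sum_sq _ x hx01 (mean x), hsx, hmx, Finset.card_univ, Fintype.card_fin]
    field_simp
    ring
  have hssty : sst y = (s0 + s1) - (s0 + s1)^2 / n := by
    unfold sst
    rw [binary_sum_sq _ y hy01 (mean y), hsy, hmy, Finset.card_univ, Fintype.card_fin]
    field_simp
    ring
  have hcov : ∑ r, (x r - mean x) * (y r - mean y) = s1 - n1 * (s0 + s1) / n := by
    rw [gen_sum_mul _ x y (mean x) (mean y), hsxy, hsx, hsy, hmx, hmy, Finset.card_univ,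
      Fintype.card_fin]
    field_simp
    ring
  have hTpos : 0 < sst y := sst_pos y hync
  have hXpos : 0 < sst x := sst_pos x hxnc
  have hsse : ∀ f : ℝ → ℝ,
      sse x y f = (n0 * (f 0)^2 - 2 * (f 0) * s0 + s0) + (n1 * (f 1)^2 - 2 * (f 1) * s1 + s1) := by
    intro f
    have e0 : ∑ r ∈ S0, (y r - f (x r))^2 = ∑ r ∈ S0, (y r - f 0)^2 :=
      Finset.sum_congr rfl (fun r hr => by rw [hx0 r hr])
    have e1 : ∑ r ∈ S1, (y r - f (x r))^2 = ∑ r ∈ S1, (y r - f 1)^2 :=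
      Finset.sum_congr rfl (fun r hr => by rw [hx1 r hr])
    unfold sse
    rw [hsplit (fun r => (y r - f (x r))^2), e0, e1,
      binary_sum_sq _ y hy01 (f 0), binary_sum_sq _ y hy01 (f 1),
      ← hs0def, ← hs1def, ← hn0def, ← hn1def]
    ring
  obtain ⟨W, hWdef⟩ : ∃ v : ℝ, v = s0 - s0^2/n0 + (s1 - s1^2/n1) := ⟨_, rfl⟩
  have hlb : ∀ f : ℝ → ℝ, W ≤ sse x y f := by
    intro f
    rw [hsse f, hWdef]
    have k0 : 0 ≤ n0 * (f 0)^2 - 2 * (f 0) * s0 + s0^2/n0 := by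
      have e : n0 * (f 0)^2 - 2 * (f 0) * s0 + s0^2/n0 = (n0 * f 0 - s0)^2 / n0 := by
        field_simp; ring
      rw [e]; positivity
    have k1 : 0 ≤ n1 * (f 1)^2 - 2 * (f 1) * s1 + s1^2/n1 := by
      have e : n1 * (f 1)^2 - 2 * (f 1) * s1 + s1^2/n1 = (n1 * f 1 - s1)^2 / n1 := by
        field_simp; ring
      rw [e]; positivity
    linarith
  obtain ⟨m0, hm0def⟩ : ∃ v : ℝ, v = s0 / n0 := ⟨_, rfl⟩
  obtain ⟨m1, hm1def⟩ : ∃ v : ℝ, v = s1 / n1 := ⟨_, rfl⟩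
  obtain ⟨F, hFdef⟩ : ∃ F : ℝ → ℝ, F = fun t => m0 + (m1 - m0) * t := ⟨_, rfl⟩
  have hF0 : F 0 = m0 := by rw [hFdef]; simp
  have hF1 : F 1 = m1 := by rw [hFdef]; simp
  have hFsse : sse x y F = W := by
    rw [hsse F, hF0, hF1, hWdef, hm0def, hm1def]
    field_simp
    ring
  have hFmono : m0 ≤ m1 → Monotone F := by
    intro h a b hab
    rw [hFdef]
    simp only
    nlinarith [mul_le_mul_of_nonneg_left hab (by linarith : (0:ℝ) ≤ m1 - m0)]
  have hFanti : m1 ≤ m0 → Antitone F := by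
    intro h a b hab
    rw [hFdef]
    simp only
    nlinarith [mul_le_mul_of_nonneg_left hab (by linarith : (0:ℝ) ≤ m0 - m1)]
  have hBSne : Set.Nonempty {e : ℝ | ∃ f : ℝ → ℝ, (Monotone f ∨ Antitone f) ∧ e = sse x y f} :=
    ⟨sse x y (fun _ => 0), fun _ => 0, Or.inl monotone_const, rfl⟩
  have hMSne : Set.Nonempty {e : ℝ | ∃ f : ℝ → ℝ, Monotone f ∧ e = sse x y f} :=
    ⟨sse x y (fun _ => 0), fun _ => 0, monotone_const, rfl⟩
  have hASne : Set.Nonempty {e : ℝ | ∃ f : ℝ → ℝ, Antitone f ∧ e = sse x y f} :=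
    ⟨sse x y (fun _ => 0), fun _ => 0, antitone_const, rfl⟩
  have hlbB : ∀ e ∈ {e : ℝ | ∃ f : ℝ → ℝ, (Monotone f ∨ Antitone f) ∧ e = sse x y f}, W ≤ e := by
    rintro e ⟨f, -, rfl⟩; exact hlb f
  have hlbM : ∀ e ∈ {e : ℝ | ∃ f : ℝ → ℝ, Monotone f ∧ e = sse x y f}, W ≤ e := by
    rintro e ⟨f, -, rfl⟩; exact hlb f
  have hlbA : ∀ e ∈ {e : ℝ | ∃ f : ℝ → ℝ, Antitone f ∧ e = sse x y f}, W ≤ e := by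
    rintro e ⟨f, -, rfl⟩; exact hlb f
  have hWBS : W ∈ {e : ℝ | ∃ f : ℝ → ℝ, (Monotone f ∨ Antitone f) ∧ e = sse x y f} := by
    rcases le_total m0 m1 with h|h
    · exact ⟨F, Or.inl (hFmono h), hFsse.symm⟩
    · exact ⟨F, Or.inr (hFanti h), hFsse.symm⟩
  have hiB : sInf {e : ℝ | ∃ f : ℝ → ℝ, (Monotone f ∨ Antitone f) ∧ e = sse x y f} = W :=
    le_antisymm (csInf_le ⟨W, hlbB⟩ hWBS) (le_csInf hBSne hlbB)
  have hminMA : min (sInf {e : ℝ | ∃ f : ℝ → ℝ, Monotone f ∧ e = sse x y f})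
      (sInf {e : ℝ | ∃ f : ℝ → ℝ, Antitone f ∧ e = sse x y f}) = W := by
    have h1 := le_csInf hMSne hlbM
    have h2 := le_csInf hASne hlbA
    rcases le_total m0 m1 with h|h
    · have h3 : sInf {e : ℝ | ∃ f : ℝ → ℝ, Monotone f ∧ e = sse x y f} ≤ W :=
        csInf_le ⟨W, hlbM⟩ ⟨F, hFmono h, hFsse.symm⟩
      exact le_antisymm (min_le_of_left_le h3) (le_min h1 h2)
    · have h3 : sInf {e : ℝ | ∃ f : ℝ → ℝ, Antitone f ∧ e = sse x y f} ≤ W :=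
        csInf_le ⟨W, hlbA⟩ ⟨F, hFanti h, hFsse.symm⟩
      exact le_antisymm (min_le_of_right_le h3) (le_min h1 h2)
  obtain ⟨c, hcdef⟩ : ∃ v : ℝ, v = s1 - n1 * (s0 + s1) / n := ⟨_, rfl⟩
  have hpe : pearson x y ^ 2 = c^2 / (sst x * sst y) := by
    unfold pearson
    rw [hcov, div_pow, Real.sq_sqrt (by positivity : (0:ℝ) ≤ sst x * sst y), hcdef]
  have hkey : c^2 = sst x * (sst y - W) := by
    rw [hcdef, hsstx, hssty, hWdef, hnn]
    field_simp
    ring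
  have hWeq : W = (1 - pearson x y ^ 2) * sst y := by
    rw [hpe, hkey]
    field_simp
    ring
  constructor
  · rw [hiB, hWeq]
  · have hfin : (1:ℝ) - W / sst y = pearson x y ^ 2 := by
      rw [hWeq, mul_div_assoc, div_self hTpos.ne', mul_one]
      ring
    rcases le_total (sInf {e : ℝ | ∃ f : ℝ → ℝ, Monotone f ∧ e = sse x y f})
        (sInf {e : ℝ | ∃ f : ℝ → ℝ, Antitone f ∧ e = sse x y f}) with h|h
    · rw [max_eq_left (by
        have := (div_le_div_iff_of_pos_right hTpos).mpr h
        linarith)]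
      rw [← hfin, ← hminMA, min_eq_left h]
    · rw [max_eq_right (by
        have := (div_le_div_iff_of_pos_right hTpos).mpr h
        linarith)]
      rw [← hfin, ← hminMA, min_eq_right h]
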